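/- Suppose 0 < |μ| < 1, k > 0, η ≠ 0 and |μ(1 + kη/2)| > 1. Then there exists N such that for every n ≥ N there is a connected finite simple undirected graph G on n vertices (namely the star graph) for which, writing λ₁ for the largest eigenvalue of its Laplacian and |E| for its number of edges, one has |μ| · |1 + kηλ₁/(2|E|)| > 1; consequently the Jacobian J = μ((kη/(2|E|))·L + I) has an eigenvalue of absolute value greater than 1, and there exists a nonzero v ∈ ℝ^n with ‖J^t v‖ → ∞. -/

import Mathlib

open Filter Topology Finset

def starG (n : ℕ) [NeZero n] : SimpleGraph (Fin n) where
  Adj i j := i ≠ j ∧ (i = 0 ∨ j = 0)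
  symm := ⟨fun i j ⟨h1, h2⟩ => ⟨h1.symm, h2.symm⟩⟩
  loopless := ⟨fun i ⟨h, _⟩ => h rfl⟩

instance starGDec (n : ℕ) [NeZero n] : DecidableRel (starG n).Adj := fun _ _ =>
  inferInstanceAs (Decidable (_ ∧ _))

lemma starG_adj {n : ℕ} [NeZero n] {i j : Fin n} :
    (starG n).Adj i j ↔ i ≠ j ∧ (i = 0 ∨ j = 0) := Iff.rfl

lemma starG_neighborFinset_zero (n : ℕ) [NeZero n] :
    (starG n).neighborFinset 0 = Finset.univ.erase 0 := by
  ext j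
  simp [SimpleGraph.mem_neighborFinset, starG_adj, eq_comm, Ne]

lemma starG_neighborFinset_ne {n : ℕ} [NeZero n] {i : Fin n} (hi : i ≠ 0) :
    (starG n).neighborFinset i = {0} := by
  ext j
  simp only [SimpleGraph.mem_neighborFinset, starG_adj, Finset.mem_singleton]
  constructor
  · rintro ⟨h1, h2 | h2⟩
    · exact absurd h2 hi
    · exact h2
  · rintro rfl; exact ⟨hi, Or.inr rfl⟩

lemma starG_degree_zero (n : ℕ) [NeZero n] : (starG n).degree 0 = n - 1 := by
  rw [SimpleGraph.degree, starG_neighborFinset_zero]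
  simp [Finset.card_erase_of_mem]

lemma starG_degree_ne {n : ℕ} [NeZero n] {i : Fin n} (hi : i ≠ 0) :
    (starG n).degree i = 1 := by
  rw [SimpleGraph.degree, starG_neighborFinset_ne hi]
  simp

lemma starG_connected (n : ℕ) [NeZero n] : (starG n).Connected := by
  rw [SimpleGraph.connected_iff]
  refine ⟨fun u v => ?_, ⟨0⟩⟩
  rcases eq_or_ne u v with rfl | huv
  · exact SimpleGraph.Reachable.refl _
  by_cases hu : u = 0
  · subst hu; exact SimpleGraph.Adj.reachable ⟨huv, Or.inl rfl⟩
  · by_cases hv : v = 0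
    · subst hv; exact SimpleGraph.Adj.reachable ⟨huv, Or.inr rfl⟩
    · exact (SimpleGraph.Adj.reachable (show (starG n).Adj u 0 from ⟨hu, Or.inr rfl⟩)).trans
        (SimpleGraph.Adj.reachable (show (starG n).Adj 0 v from ⟨Ne.symm hv, Or.inl rfl⟩))

lemma starG_card_edges (n : ℕ) [NeZero n] : (starG n).edgeFinset.card = n - 1 := by
  have h := SimpleGraph.sum_degrees_eq_twice_card_edges (starG n)
  have hsum : ∑ v : Fin n, (starG n).degree v = 2 * (n - 1) := by
    rw [← Finset.add_sum_erase _ _ (Finset.mem_univ (0 : Fin n)), starG_degree_zero]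
    rw [Finset.sum_congr rfl (fun i hi => starG_degree_ne (Finset.ne_of_mem_erase hi))]
    simp [Finset.card_erase_of_mem, Fintype.card_fin]
    omega
  omega

lemma starG_lap_mulVec_zero {n : ℕ} [NeZero n] (v : Fin n → ℝ) :
    (((starG n).lapMatrix ℝ).mulVec v) 0
      = ((n : ℝ) - 1) * v 0 - ∑ j ∈ Finset.univ.erase (0 : Fin n), v j := by
  rw [SimpleGraph.lapMatrix_mulVec_apply, starG_degree_zero, starG_neighborFinset_zero]
  have h1 : 1 ≤ n := Nat.one_le_iff_ne_zero.mpr (NeZero.ne n)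
  rw [Nat.cast_sub h1]
  norm_num

lemma starG_lap_mulVec_ne {n : ℕ} [NeZero n] (v : Fin n → ℝ) {i : Fin n} (hi : i ≠ 0) :
    (((starG n).lapMatrix ℝ).mulVec v) i = v i - v 0 := by
  rw [SimpleGraph.lapMatrix_mulVec_apply, starG_degree_ne hi, starG_neighborFinset_ne hi]
  simp

/-- the top eigenvector of the star -/
noncomputable def starVec (n : ℕ) [NeZero n] : Fin n → ℝ :=
  fun i => if i = 0 then (n : ℝ) - 1 else -1

lemma starVec_ne_zero {n : ℕ} [NeZero n] (hn : 2 ≤ n) : starVec n ≠ 0 := by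
  intro h
  have := congrFun h ⟨1, by omega⟩
  simp [starVec, Fin.ext_iff] at this

lemma starVec_eigen {n : ℕ} [NeZero n] (hn : 2 ≤ n) :
    (((starG n).lapMatrix ℝ).mulVec (starVec n)) = (n : ℝ) • starVec n := by
  funext i
  by_cases hi : i = 0
  · subst hi
    rw [starG_lap_mulVec_zero]
    have hcard : (Finset.univ.erase (0 : Fin n)).card = n - 1 := by
      simp [Finset.card_erase_of_mem]
    rw [Finset.sum_congr rfl (fun j hj => show starVec n j = -1 by
      simp [starVec, Finset.ne_of_mem_erase hj])]
    rw [Finset.sum_const, hcard]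
    have h1 : 1 ≤ n := by omega
    simp only [starVec, if_pos rfl, if_true, ite_true, Pi.smul_apply, smul_eq_mul, nsmul_eq_mul,
      Nat.cast_sub h1, Nat.cast_one]
    ring
  · rw [starG_lap_mulVec_ne _ hi]
    simp only [starVec, if_neg hi, if_pos rfl, if_true, ite_true, Pi.smul_apply, smul_eq_mul]
    ring

lemma starG_eigen_le {n : ℕ} [NeZero n] (hn : 2 ≤ n) {b : ℝ} {v : Fin n → ℝ}
    (hv : v ≠ 0) (h : ((starG n).lapMatrix ℝ).mulVec v = b • v) : b ≤ n := by
  have hn1 : (2 : ℝ) ≤ n := by exact_mod_cast hn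
  have h0 : ((n : ℝ) - 1) * v 0 - ∑ j ∈ Finset.univ.erase (0 : Fin n), v j = b * v 0 := by
    have := congrFun h 0
    rwa [starG_lap_mulVec_zero] at this
  have hi : ∀ i : Fin n, i ≠ 0 → v i - v 0 = b * v i := by
    intro i hi'
    have := congrFun h i
    rwa [starG_lap_mulVec_ne _ hi'] at this
  by_cases hb1 : b = 1
  · subst hb1; linarith
  · have h1b : (1 : ℝ) - b ≠ 0 := fun hh => hb1 (by linarith [hh])
    have key : ∀ i : Fin n, i ≠ 0 → v i = v 0 / (1 - b) := by
      intro i hi'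
      have := hi i hi'
      field_simp
      linarith [this]
    by_cases hv0 : v 0 = 0
    · exfalso
      apply hv
      funext i
      by_cases hi' : i = 0
      · simp [hi', hv0]
      · rw [key i hi', hv0]; simp
    · have hS : ∑ j ∈ Finset.univ.erase (0 : Fin n), v j = ((n : ℝ) - 1) * (v 0 / (1 - b)) := by
        rw [Finset.sum_congr rfl (fun j hj => key j (Finset.ne_of_mem_erase hj)),
          Finset.sum_const]
        have hcard : (Finset.univ.erase (0 : Fin n)).card = n - 1 := by
          simp [Finset.card_erase_of_mem]
        rw [hcard, nsmul_eq_mul, Nat.cast_sub (by omega : 1 ≤ n), Nat.cast_one]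
      rw [hS] at h0
      have hpoly : b * (b - n) * v 0 = 0 := by
        field_simp at h0
        linear_combination v 0 * h0
      rcases mul_eq_zero.mp hpoly with hbb | hzz
      · rcases mul_eq_zero.mp hbb with hb0 | hbn
        · rw [hb0]; linarith
        · linarith
      · exact absurd hzz hv0

/-- unstable half of the phase transition: if `0 < |μ| < 1`,
`k > 0`, `η ≠ 0` and `|μ (1 + kη/2)| > 1`, then for all large enough `n` there
is a connected graph on `n` vertices (the star graph) with
`|μ| * |1 + kηλ₁/(2|E|)| > 1`; the Jacobian `J = μ ((kη/(2|E|)) L + I)` has an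
eigenvalue of absolute value greater than `1`, and some nonzero `v` satisfies
`‖J ^ t v‖ → ∞`. -/
theorem equal_wealth_unstable_some_graph (η μ k : ℝ)
    (hμ0 : 0 < |μ|) (hμ1 : |μ| < 1) (hk : 0 < k) (hη : η ≠ 0)
    (hcrit : 1 < |μ * (1 + k * η / 2)|) :
    ∃ N : ℕ, ∀ n : ℕ, N ≤ n →
      ∃ (G : SimpleGraph (Fin n)) (_ : DecidableRel G.Adj), G.Connected ∧
        ∃ lam1 : ℝ,
          IsGreatest {b : ℝ | ∃ v : Fin n → ℝ, v ≠ 0 ∧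
            (G.lapMatrix ℝ).mulVec v = b • v} lam1 ∧
          1 < |μ| * |1 + k * η * lam1 / (2 * (G.edgeFinset.card : ℝ))| ∧
          (∃ lam : ℝ, ∃ v : Fin n → ℝ, v ≠ 0 ∧
            ((μ • ((k * η / (2 * (G.edgeFinset.card : ℝ))) • G.lapMatrix ℝ
              + (1 : Matrix (Fin n) (Fin n) ℝ)))).mulVec v = lam • v ∧ 1 < |lam|) ∧
          ∃ v : Fin n → ℝ, v ≠ 0 ∧
            Tendsto
              (fun t : ℕ =>
                ‖((μ • ((k * η / (2 * (G.edgeFinset.card : ℝ))) • G.lapMatrix ℝ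
                  + (1 : Matrix (Fin n) (Fin n) ℝ))) ^ t).mulVec v‖)
              atTop atTop := by
  -- limit of the rate along star graphs
  have htend : Tendsto (fun n : ℕ => |μ| * |1 + k * η * (n : ℝ) / (2 * ((n : ℝ) - 1))|)
      atTop (𝓝 (|μ * (1 + k * η / 2)|)) := by
    have h1 : Tendsto (fun n : ℕ => ((n : ℝ) - 1)) atTop atTop :=
      tendsto_atTop_add_const_right _ _ tendsto_natCast_atTop_atTop
    have h2 : Tendsto (fun n : ℕ => ((n : ℝ) - 1)⁻¹) atTop (𝓝 0) := h1.inv_tendsto_atTop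
    have h3 : Tendsto (fun n : ℕ => |μ| * |1 + k * η / 2 + (k * η / 2) * ((n : ℝ) - 1)⁻¹|)
        atTop (𝓝 (|μ| * |1 + k * η / 2 + (k * η / 2) * 0|)) :=
      ((tendsto_const_nhds.add (tendsto_const_nhds.mul h2)).abs).const_mul _
    have h4 : |μ| * |1 + k * η / 2 + (k * η / 2) * 0| = |μ * (1 + k * η / 2)| := by
      rw [abs_mul]; ring_nf
    rw [h4] at h3
    refine h3.congr' ?_
    filter_upwards [eventually_ge_atTop 2] with n hn
    have hne : ((n : ℝ) - 1) ≠ 0 := by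
      have : (2 : ℝ) ≤ n := by exact_mod_cast hn
      intro h; linarith
    have heq : 1 + k * η / 2 + (k * η / 2) * ((n : ℝ) - 1)⁻¹
        = 1 + k * η * (n : ℝ) / (2 * ((n : ℝ) - 1)) := by
      field_simp
      ring
    rw [heq]
  have hev : ∀ᶠ n : ℕ in atTop,
      1 < |μ| * |1 + k * η * (n : ℝ) / (2 * ((n : ℝ) - 1))| :=
    htend.eventually (eventually_gt_nhds hcrit)
  obtain ⟨N, hN⟩ := eventually_atTop.mp (hev.and (eventually_ge_atTop 2))
  refine ⟨N, fun n hn => ?_⟩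
  obtain ⟨hfn, hn2⟩ := hN n hn
  haveI : NeZero n := ⟨by omega⟩
  have he : (((starG n).edgeFinset.card : ℕ) : ℝ) = (n : ℝ) - 1 := by
    rw [starG_card_edges, Nat.cast_sub (by omega : 1 ≤ n), Nat.cast_one]
  refine ⟨starG n, starGDec n, starG_connected n, (n : ℝ),
    ⟨⟨starVec n, starVec_ne_zero hn2, starVec_eigen hn2⟩, ?_⟩, ?_⟩
  · rintro b ⟨v, hv0, hv⟩
    exact starG_eigen_le hn2 hv0 hv
  rw [he]
  set a : ℝ := k * η / (2 * ((n : ℝ) - 1)) with ha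
  set lam : ℝ := μ * (a * n + 1) with hlamdef
  set J : Matrix (Fin n) (Fin n) ℝ := μ • (a • (starG n).lapMatrix ℝ + 1) with hJ
  have hJw : J.mulVec (starVec n) = lam • starVec n := by
    rw [hJ, Matrix.smul_mulVec, Matrix.add_mulVec, Matrix.smul_mulVec,
      starVec_eigen hn2, Matrix.one_mulVec]
    funext i
    simp only [Pi.smul_apply, Pi.add_apply, smul_eq_mul, hlamdef]
    ring
  have hlamabs : |lam| = |μ| * |1 + k * η * (n : ℝ) / (2 * ((n : ℝ) - 1))| := by
    rw [hlamdef, abs_mul, ha]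
    congr 1
    congr 1
    ring
  have hlam : 1 < |lam| := by rw [hlamabs]; exact hfn
  have hpow : ∀ t : ℕ, (J ^ t).mulVec (starVec n) = lam ^ t • starVec n := by
    intro t
    induction t with
    | zero => simp [Matrix.one_mulVec]
    | succ t ih =>
      rw [pow_succ, ← Matrix.mulVec_mulVec, hJw, Matrix.mulVec_smul, ih, smul_smul, ← pow_succ']
  refine ⟨hfn, ⟨lam, starVec n, starVec_ne_zero hn2, hJw, hlam⟩,
    starVec n, starVec_ne_zero hn2, ?_⟩
  have hnorm : ∀ t : ℕ, ‖(J ^ t).mulVec (starVec n)‖ = |lam| ^ t * ‖starVec n‖ := by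
    intro t
    rw [hpow t, norm_smul, Real.norm_eq_abs, abs_pow]
  have hvpos : 0 < ‖starVec n‖ := norm_pos_iff.mpr (starVec_ne_zero hn2)
  have := (tendsto_pow_atTop_atTop_of_one_lt hlam).atTop_mul_const hvpos
  exact this.congr fun t => (hnorm t).symm
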